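/- Let (wₙ) be a sequence of pairwise disjointly supported vectors in ℓ₂ with δ < ‖wₙ‖₂ ≤ 1 for some δ > 0, and let ψ : [0,∞) → ℝ be bi-Lipschitz with lower constant b > 0 and ψ(0) = 0. Then for every N, Σ_{n=1}^N ‖wₙ‖₂² · |ψ(log(‖Σ_{j=1}^N w_j‖₂ / ‖wₙ‖₂))|² ≥ b²·N·δ²·(log(δ√N))² for N large enough that δ√N > 1. In particular, (1/N)·Σ_{n=1}^N ‖wₙ‖₂²·|ψ(log(‖Σⱼwⱼ‖₂/‖wₙ‖₂))|² → ∞ as N → ∞. -/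

import Mathlib

open Real

/-- The ℓ₂ norm of a finitely supported sequence. -/
noncomputable def l2 (x : ℕ →₀ ℝ) : ℝ :=
  Real.sqrt (∑ n ∈ x.support, (x n) ^ 2)

/-- The Kalton–Peck type quasi-linear map `Ω_φ(x) = ∑ₙ xₙ φ(log(‖x‖₂/|xₙ|)) eₙ` on `c₀₀`. -/
noncomputable def Omega (φ : ℝ → ℝ) (x : ℕ →₀ ℝ) : ℕ →₀ ℝ :=
  Finsupp.onFinset x.support
    (fun n => x n * φ (Real.log (l2 x / |x n|)))
    (fun n h => Finsupp.mem_support_iff.2 (left_ne_zero_of_mul h))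

lemma l2_nonneg (x : ℕ →₀ ℝ) : 0 ≤ l2 x := Real.sqrt_nonneg _

lemma l2_sq (x : ℕ →₀ ℝ) : l2 x ^ 2 = ∑ n ∈ x.support, (x n) ^ 2 :=
  Real.sq_sqrt (Finset.sum_nonneg fun n _ => sq_nonneg _)

lemma l2_sum_sq (w : ℕ → (ℕ →₀ ℝ)) (S : Finset ℕ)
    (hdisj : ∀ i j, i ≠ j → Disjoint (w i).support (w j).support) :
    (l2 (∑ j ∈ S, w j)) ^ 2 = ∑ j ∈ S, (l2 (w j)) ^ 2 := by
  rw [l2_sq, Finsupp.support_sum_eq_biUnion S (fun i j hij => hdisj i j hij),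
    Finset.sum_biUnion (fun i _ j _ hij => hdisj i j hij)]
  refine Finset.sum_congr rfl fun j hj => ?_
  rw [l2_sq]
  refine Finset.sum_congr rfl fun n hn => ?_
  congr 1
  rw [Finset.sum_apply']
  rw [Finset.sum_eq_single j]
  · intro i _ hij
    exact Finsupp.notMem_support_iff.1
      (Finset.disjoint_left.mp (hdisj j i hij.symm) hn)
  · intro h; exact absurd hj h

theorem stmt17 (w : ℕ → (ℕ →₀ ℝ)) (δ : ℝ) (hδ : 0 < δ)
    (hdisj : ∀ i j, i ≠ j → Disjoint (w i).support (w j).support)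
    (hlow : ∀ n, δ < l2 (w n)) (hup : ∀ n, l2 (w n) ≤ 1)
    (ψ : ℝ → ℝ) (b : ℝ) (hb : 0 < b) (hψ0 : ψ 0 = 0)
    (hbi : ∀ s ∈ Set.Ici (0:ℝ), ∀ t ∈ Set.Ici (0:ℝ), b * |s - t| ≤ |ψ s - ψ t|) :
    (∀ N : ℕ, 1 < δ * Real.sqrt N →
      b ^ 2 * N * δ ^ 2 * (Real.log (δ * Real.sqrt N)) ^ 2 ≤
        ∑ n ∈ Finset.range N, (l2 (w n)) ^ 2 *
          (ψ (Real.log (l2 (∑ j ∈ Finset.range N, w j) / l2 (w n)))) ^ 2) ∧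
    Filter.Tendsto (fun N : ℕ => (1 / (N : ℝ)) *
        ∑ n ∈ Finset.range N, (l2 (w n)) ^ 2 *
          (ψ (Real.log (l2 (∑ j ∈ Finset.range N, w j) / l2 (w n)))) ^ 2)
      Filter.atTop Filter.atTop := by
  have key : ∀ N : ℕ, 1 < δ * Real.sqrt N →
      b ^ 2 * N * δ ^ 2 * (Real.log (δ * Real.sqrt N)) ^ 2 ≤
        ∑ n ∈ Finset.range N, (l2 (w n)) ^ 2 *
          (ψ (Real.log (l2 (∑ j ∈ Finset.range N, w j) / l2 (w n)))) ^ 2 := by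
    intro N hN
    set L := l2 (∑ j ∈ Finset.range N, w j) with hL
    set c := Real.log (δ * Real.sqrt N) with hc
    have hδN : 0 < δ * Real.sqrt N := lt_trans one_pos hN
    have hc0 : 0 ≤ c := Real.log_nonneg hN.le
    -- L ≥ δ √N
    have hLsq : L ^ 2 = ∑ j ∈ Finset.range N, (l2 (w j)) ^ 2 := l2_sum_sq w _ hdisj
    have hLsq2 : (δ * Real.sqrt N) ^ 2 ≤ L ^ 2 := by
      rw [hLsq, mul_pow, Real.sq_sqrt (Nat.cast_nonneg N)]
      calc δ ^ 2 * N = ∑ _j ∈ Finset.range N, δ ^ 2 := by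
            rw [Finset.sum_const, Finset.card_range, nsmul_eq_mul, mul_comm]
        _ ≤ ∑ j ∈ Finset.range N, (l2 (w j)) ^ 2 :=
            Finset.sum_le_sum fun j _ =>
              pow_le_pow_left₀ hδ.le (hlow j).le 2
    have hLge : δ * Real.sqrt N ≤ L := by
      have := Real.sqrt_le_sqrt hLsq2
      rwa [Real.sqrt_sq hδN.le, Real.sqrt_sq (l2_nonneg _)] at this
    -- pointwise bound
    have hterm : ∀ n ∈ Finset.range N,
        b ^ 2 * δ ^ 2 * c ^ 2 ≤ (l2 (w n)) ^ 2 * (ψ (Real.log (L / l2 (w n)))) ^ 2 := by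
      intro n _
      have hwpos : 0 < l2 (w n) := lt_trans hδ (hlow n)
      have hratio : δ * Real.sqrt N ≤ L / l2 (w n) := by
        calc δ * Real.sqrt N ≤ L := hLge
          _ ≤ L / l2 (w n) := by
            rw [le_div_iff₀ hwpos]
            nlinarith [l2_nonneg (∑ j ∈ Finset.range N, w j), hup n]
      set s := Real.log (L / l2 (w n)) with hs
      have hcs : c ≤ s := Real.log_le_log hδN hratio
      have hs0 : 0 ≤ s := le_trans hc0 hcs
      have hpsi : b * s ≤ |ψ s| := by
        have := hbi s hs0 0 (Set.mem_Ici.2 le_rfl)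
        simpa [hψ0, abs_of_nonneg hs0] using this
      have h1 : b ^ 2 * c ^ 2 ≤ (ψ s) ^ 2 := by
        have h2 : (b * s) ^ 2 ≤ (ψ s) ^ 2 := by
          rw [← sq_abs (ψ s)]
          exact pow_le_pow_left₀ (by positivity) hpsi 2
        nlinarith [pow_le_pow_left₀ hc0 hcs 2, sq_nonneg b]
      have h3 : δ ^ 2 ≤ (l2 (w n)) ^ 2 := pow_le_pow_left₀ hδ.le (hlow n).le 2
      nlinarith [sq_nonneg (ψ s)]
    calc b ^ 2 * N * δ ^ 2 * c ^ 2
        = ∑ _n ∈ Finset.range N, b ^ 2 * δ ^ 2 * c ^ 2 := by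
          rw [Finset.sum_const, Finset.card_range, nsmul_eq_mul]; ring
      _ ≤ _ := Finset.sum_le_sum hterm
  refine ⟨key, ?_⟩
  have h1 : Filter.Tendsto (fun N : ℕ => δ * Real.sqrt N) Filter.atTop Filter.atTop := by
    apply Filter.Tendsto.const_mul_atTop hδ
    have hsqrt : Filter.Tendsto Real.sqrt Filter.atTop Filter.atTop := by
      rw [show Real.sqrt = fun x : ℝ => x ^ ((1:ℝ)/2) from funext Real.sqrt_eq_rpow]
      exact tendsto_rpow_atTop (by norm_num)
    exact hsqrt.comp tendsto_natCast_atTop_atTop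
  have hg : Filter.Tendsto (fun N : ℕ => b ^ 2 * δ ^ 2 * (Real.log (δ * Real.sqrt N)) ^ 2)
      Filter.atTop Filter.atTop := by
    apply Filter.Tendsto.const_mul_atTop (by positivity : (0:ℝ) < b ^ 2 * δ ^ 2)
    exact (Filter.tendsto_pow_atTop two_ne_zero).comp (Real.tendsto_log_atTop.comp h1)
  apply Filter.tendsto_atTop_mono' _ _ hg
  filter_upwards [h1.eventually_gt_atTop 1] with N hN
  have hNpos : 0 < (N : ℝ) := by
    have : N ≠ 0 := by rintro rfl; simp at hN; linarith
    exact_mod_cast Nat.pos_of_ne_zero this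
  calc b ^ 2 * δ ^ 2 * (Real.log (δ * Real.sqrt N)) ^ 2
      = (1 / (N : ℝ)) * (b ^ 2 * N * δ ^ 2 * (Real.log (δ * Real.sqrt N)) ^ 2) := by
        field_simp
    _ ≤ _ := by
        apply mul_le_mul_of_nonneg_left (key N hN) (by positivity)
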